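/- Fix q ∈ (0,1), set η_q := log(1/q) and g(x) := η_q·x²/2. Let h_n : ℝ → [0, +∞] be a family of weakly decreasing functions such that: (i) h_n(x) = +∞ for x < 0, there exists M > 0 with h_n(x) ∈ [0, M] for all x ≥ 0 and all n, and sup_{x ≥ 2} h_n(x) → 0 as n → ∞; (ii) for all ε > 0 there exist δ > 0 and n_ε such that for all n ≥ n_ε and all x, y ∈ [0, 2] with |x − y| ≤ δ one has |h_n(x) − h_n(y)| ≤ ε; (iii) every function arising as a pointwise limit of a subsequence of (h_n) is convex. Assume that (h_n ⊕ g)(x) converges pointwise to a function f that is proper, lower semicontinuous and convex. Then h_n converges pointwise to h := (f ⊖ g), one has f = g ⊕ h, the function h is continuous on [0, ∞), and f is differentiable on ℝ with derivative f' Lipschitz continuous with constant η_q. -/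

import Mathlib

open Filter Topology

/-- Convexity for an `EReal`-valued function on `ℝ`. -/
def ERealConvexOn (H : ℝ → EReal) : Prop :=
  ∀ a b t : ℝ, 0 ≤ t → t ≤ 1 →
    H (t * a + (1 - t) * b) ≤ (t : EReal) * H a + ((1 - t) : EReal) * H b

/-- The infimal convolution `(g ⊕ h)(x) = inf_y { g(y) + h(x − y) }`. -/
noncomputable def infConv (g : ℝ → ℝ) (h : ℝ → EReal) (x : ℝ) : EReal :=
  ⨅ y : ℝ, ((g y : EReal) + h (x - y))

/-- The infimal deconvolution `(f ⊖ g)(x) = sup_y { f(x − y) − g(y) }`. -/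
noncomputable def infDeconv (f : ℝ → EReal) (g : ℝ → ℝ) (x : ℝ) : EReal :=
  ⨆ y : ℝ, (f (x - y) - (g y : EReal))

/-- The parabola `g(x) = η_q·x²/2` with `η_q = log(1/q)`. -/
noncomputable def gPar (q : ℝ) (x : ℝ) : ℝ := Real.log (1 / q) * x ^ 2 / 2

namespace Deconv

noncomputable def gE (η : ℝ) (x : ℝ) : ℝ := η * x ^ 2 / 2

lemma gE_nonneg {η : ℝ} (hη : 0 < η) (x : ℝ) : 0 ≤ gE η x := by
  unfold gE; positivity

lemma gE_even (η x : ℝ) : gE η (-x) = gE η x := by unfold gE; ring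

lemma gE_sub_grad {η : ℝ} (hη : 0 < η) (a b : ℝ) :
    gE η b + η * b * (a - b) ≤ gE η a := by
  have h : gE η a - (gE η b + η * b * (a - b)) = η * (a - b) ^ 2 / 2 := by
    unfold gE; ring
  nlinarith [sq_nonneg (a - b)]

/-- quadratic exact convexity identity -/
lemma gE_combo (η t a b z : ℝ) :
    gE η (t * a + (1 - t) * b - z)
      = t * gE η (a - z) + (1 - t) * gE η (b - z)
        - η * t * (1 - t) * (a - b) ^ 2 / 2 := by
  unfold gE; ring

structure Setup (η : ℝ) (hn : ℕ → ℝ → EReal) (M : ℝ) (f : ℝ → EReal) : Prop where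
  hη : 0 < η
  hanti : ∀ n, Antitone (hn n)
  hneg : ∀ n, ∀ x : ℝ, x < 0 → hn n x = ⊤
  hM : 0 < M
  hbdd : ∀ n, ∀ x : ℝ, 0 ≤ x → hn n x ∈ Set.Icc (0 : EReal) (M : EReal)
  hsup : ∀ ε : ℝ, 0 < ε → ∃ N, ∀ n ≥ N, ∀ x : ℝ, 2 ≤ x → hn n x ≤ (ε : EReal)
  hequi : ∀ ε : ℝ, 0 < ε → ∃ δ > (0 : ℝ), ∃ N, ∀ n ≥ N,
      ∀ x ∈ Set.Icc (0 : ℝ) 2, ∀ y ∈ Set.Icc (0 : ℝ) 2,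
        |x - y| ≤ δ → |(hn n x).toReal - (hn n y).toReal| ≤ ε
  hsubconv : ∀ φ : ℕ → ℕ, StrictMono φ → ∀ H : ℝ → EReal,
      (∀ x, Tendsto (fun k => hn (φ k) x) atTop (nhds (H x))) → ERealConvexOn H
  hconvlim : ∀ x, Tendsto (fun n => infConv (gE η) (hn n) x) atTop (nhds (f x))

variable {η M : ℝ} {hn : ℕ → ℝ → EReal} {f : ℝ → EReal}

lemma Setup.hn_ne_bot (S : Setup η hn M f) (n : ℕ) (x : ℝ) : hn n x ≠ ⊥ := by
  rcases lt_or_ge x 0 with h | h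
  · simp [S.hneg n x h]
  · exact ne_of_gt (lt_of_lt_of_le (by simp : (⊥:EReal) < 0) (S.hbdd n x h).1)

lemma Setup.hn_nonneg (S : Setup η hn M f) (n : ℕ) (x : ℝ) : (0:EReal) ≤ hn n x := by
  rcases lt_or_ge x 0 with h | h
  · simp [S.hneg n x h]
  · exact (S.hbdd n x h).1

/-- lower bound for each term of the inf-convolution -/
lemma Setup.term_nonneg (S : Setup η hn M f) (n : ℕ) (x y : ℝ) :
    (0:EReal) ≤ (gE η y : EReal) + hn n (x - y) := by
  have h1 : (0:EReal) ≤ (gE η y : EReal) := by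
    exact_mod_cast gE_nonneg S.hη y
  have h2 := S.hn_nonneg n (x - y)
  calc (0:EReal) = 0 + 0 := by simp
  _ ≤ _ := add_le_add h1 h2

lemma Setup.infConv_nonneg (S : Setup η hn M f) (n : ℕ) (x : ℝ) :
    (0:EReal) ≤ infConv (gE η) (hn n) x :=
  le_iInf fun y => S.term_nonneg n x y

lemma Setup.infConv_le (S : Setup η hn M f) (n : ℕ) (x : ℝ) :
    infConv (gE η) (hn n) x ≤ ((gE η x + M : ℝ) : EReal) := by
  have : infConv (gE η) (hn n) x ≤ (gE η x : EReal) + hn n (x - x) := iInf_le _ x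
  refine this.trans ?_
  rw [sub_self]
  rw [EReal.coe_add]
  exact add_le_add (le_refl _) (S.hbdd n 0 le_rfl).2

lemma Setup.f_nonneg (S : Setup η hn M f) (x : ℝ) : (0:EReal) ≤ f x :=
  ge_of_tendsto' (S.hconvlim x) (fun n => S.infConv_nonneg n x)

lemma Setup.f_le (S : Setup η hn M f) (x : ℝ) : f x ≤ ((gE η x + M : ℝ) : EReal) :=
  le_of_tendsto' (S.hconvlim x) (fun n => S.infConv_le n x)

lemma Setup.f_ne_top (S : Setup η hn M f) (x : ℝ) : f x ≠ ⊤ :=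
  ne_top_of_le_ne_top (EReal.coe_ne_top _) (S.f_le x)

lemma Setup.f_ne_bot (S : Setup η hn M f) (x : ℝ) : f x ≠ ⊥ :=
  ne_of_gt (lt_of_lt_of_le (by simp : (⊥:EReal) < 0) (S.f_nonneg x))

/-- the real-valued version of `f` -/
noncomputable def Setup.F (_S : Setup η hn M f) (x : ℝ) : ℝ := (f x).toReal

lemma Setup.f_eq_F (S : Setup η hn M f) (x : ℝ) : f x = ((S.F x : ℝ) : EReal) :=
  (EReal.coe_toReal (S.f_ne_top x) (S.f_ne_bot x)).symm

lemma Setup.F_nonneg (S : Setup η hn M f) (x : ℝ) : 0 ≤ S.F x := by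
  have := S.f_nonneg x; rw [S.f_eq_F x] at this; exact_mod_cast this

lemma Setup.F_le (S : Setup η hn M f) (x : ℝ) : S.F x ≤ gE η x + M := by
  have := S.f_le x; rw [S.f_eq_F x] at this; exact_mod_cast this

lemma exists_subseq_rat {M : ℝ} (v : ℕ → ℚ → ℝ) (hv : ∀ n r, v n r ∈ Set.Icc (0:ℝ) M) :
    ∃ ms : ℕ → ℕ, StrictMono ms ∧ ∃ L : ℚ → ℝ,
      ∀ r : ℚ, Tendsto (fun k => v (ms k) r) atTop (𝓝 (L r)) := by
  set u : ℕ → (ℚ → Set.Icc (0:ℝ) M) := fun n r => ⟨v n r, hv n r⟩ with hu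
  obtain ⟨a, -, ms, hms, hconv⟩ :=
    (isCompact_univ : IsCompact (Set.univ : Set (ℚ → Set.Icc (0:ℝ) M))).tendsto_subseq
      (x := u) (fun n => trivial)
  refine ⟨ms, hms, fun r => (a r : ℝ), fun r => ?_⟩
  exact (continuous_subtype_val.tendsto _).comp ((tendsto_pi_nhds.1 hconv) r)

lemma Setup.hn_ne_top_of_nonneg (S : Setup η hn M f) (n : ℕ) {x : ℝ} (hx : 0 ≤ x) :
    hn n x ≠ ⊤ :=
  ne_top_of_le_ne_top (EReal.coe_ne_top _) (S.hbdd n x hx).2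


lemma Setup.hn_eq_coe (S : Setup η hn M f) (n : ℕ) {x : ℝ} (hx : 0 ≤ x) :
    hn n x = (((hn n x).toReal : ℝ) : EReal) :=
  (EReal.coe_toReal (S.hn_ne_top_of_nonneg n hx) (S.hn_ne_bot n x)).symm

lemma Setup.toReal_mem (S : Setup η hn M f) (n : ℕ) (x : ℝ) :
    (hn n x).toReal ∈ Set.Icc (0:ℝ) M := by
  rcases lt_or_ge x 0 with h | h
  · simp [S.hneg n x h, le_of_lt S.hM]
  · obtain ⟨h1, h2⟩ := S.hbdd n x h
    constructor
    · have := EReal.toReal_le_toReal h1 (by simp) (S.hn_ne_top_of_nonneg n h)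
      simpa using this
    · have := EReal.toReal_le_toReal h2 (S.hn_ne_bot n x) (by simp)
      simpa using this

lemma Setup.toReal_le_of_le {c : ℝ} (S : Setup η hn M f) {n : ℕ} {x : ℝ}
    (h : hn n x ≤ (c : EReal)) : (hn n x).toReal ≤ c := by
  have := EReal.toReal_le_toReal h (S.hn_ne_bot n x) (by simp)
  simpa using this

/-- The main extraction lemma. -/
lemma Setup.extract (S : Setup η hn M f) (ns : ℕ → ℕ) (hns : StrictMono ns) :
    ∃ ms : ℕ → ℕ, StrictMono ms ∧ ∃ H : ℝ → EReal,
      ∀ x, Tendsto (fun k => hn (ns (ms k)) x) atTop (𝓝 (H x)) := by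
  obtain ⟨ms, hms, L, hL⟩ := exists_subseq_rat (M := M)
    (fun n r => (hn (ns n) r).toReal) (fun n r => S.toReal_mem (ns n) r)
  set ψ : ℕ → ℕ := fun k => ns (ms k) with hψ
  have hψmono : StrictMono ψ := hns.comp hms
  have hψle : ∀ k, k ≤ ψ k := fun k => hψmono.le_apply
  -- existence of a limit at each nonnegative real point
  have hex : ∀ x : ℝ, 0 ≤ x →
      ∃ l, Tendsto (fun k => (hn (ψ k) x).toReal) atTop (𝓝 l) := by
    intro x hx
    rcases le_or_gt x 2 with hx2 | hx2
    · -- Cauchy via equicontinuity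
      apply cauchySeq_tendsto_of_complete
      rw [Metric.cauchySeq_iff]
      intro ε hε
      obtain ⟨δ, hδ, N₀, hN₀⟩ := S.hequi (ε/4) (by linarith)
      -- pick a rational point near x
      obtain ⟨r, hr0, hr2, hrx⟩ : ∃ r : ℚ, 0 ≤ (r:ℝ) ∧ (r:ℝ) ≤ 2 ∧ |x - r| ≤ δ := by
        rcases le_or_gt x δ with h | h
        · exact ⟨0, by norm_num, by norm_num, by rw [abs_of_nonneg (by simpa using hx)]; simpa using h⟩
        · obtain ⟨r, hr1, hr2⟩ := exists_rat_btwn (show x - δ < x by linarith)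
          exact ⟨r, by linarith, by linarith, by rw [abs_of_nonneg (by linarith)]; linarith⟩
      have hcb : CauchySeq (fun k => (hn (ψ k) (r:ℝ)).toReal) := (hL r).cauchySeq
      rw [Metric.cauchySeq_iff] at hcb
      obtain ⟨N₁, hN₁⟩ := hcb (ε/4) (by linarith)
      refine ⟨max N₀ N₁, fun k hk j hj => ?_⟩
      have hknear : ∀ m, N₀ ≤ m → |(hn (ψ m) x).toReal - (hn (ψ m) (r:ℝ)).toReal| ≤ ε/4 := by
        intro m hm
        exact hN₀ (ψ m) (le_trans hm (hψle m)) x ⟨hx, hx2⟩ (r:ℝ) ⟨hr0, hr2⟩ hrx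
      have h1 := hknear k (le_trans (le_max_left _ _) hk)
      have h2 := hknear j (le_trans (le_max_left _ _) hj)
      have h3 := hN₁ k (le_trans (le_max_right _ _) hk) j (le_trans (le_max_right _ _) hj)
      rw [Real.dist_eq] at h3 ⊢
      have t1 := abs_sub_le ((hn (ψ k) x).toReal) ((hn (ψ k) (r:ℝ)).toReal) ((hn (ψ j) x).toReal)
      have t2 := abs_sub_le ((hn (ψ k) (r:ℝ)).toReal) ((hn (ψ j) (r:ℝ)).toReal) ((hn (ψ j) x).toReal)
      have h2' : |(hn (ψ j) (r:ℝ)).toReal - (hn (ψ j) x).toReal| ≤ ε/4 := by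
        rw [abs_sub_comm]; exact h2
      linarith
    · -- tends to 0 beyond 2
      refine ⟨0, Metric.tendsto_atTop.2 fun ε hε => ?_⟩
      obtain ⟨N₀, hN₀⟩ := S.hsup (ε/2) (by linarith)
      refine ⟨N₀, fun k hk => ?_⟩
      have hle : (hn (ψ k) x).toReal ≤ ε/2 :=
        S.toReal_le_of_le (hN₀ (ψ k) (le_trans hk (hψle k)) x (le_of_lt hx2))
      have hge : 0 ≤ (hn (ψ k) x).toReal := (S.toReal_mem (ψ k) x).1
      rw [Real.dist_eq, sub_zero, abs_of_nonneg hge]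
      linarith
  classical
  refine ⟨ms, hms, fun x => if hx : 0 ≤ x then (((hex x hx).choose : ℝ) : EReal) else ⊤, ?_⟩
  intro x
  by_cases hx : 0 ≤ x
  · simp only [dif_pos hx]
    have := (hex x hx).choose_spec
    have : Tendsto (fun k => (((hn (ψ k) x).toReal : ℝ) : EReal)) atTop
        (𝓝 (((hex x hx).choose : ℝ) : EReal)) := EReal.tendsto_coe.2 this
    refine this.congr fun k => (S.hn_eq_coe (ψ k) hx).symm
  · simp only [dif_neg hx]
    have : ∀ k, hn (ψ k) x = ⊤ := fun k => S.hneg (ψ k) x (lt_of_not_ge hx)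
    exact tendsto_const_nhds.congr fun k => (this k).symm


section LimSec
variable (S : Setup η hn M f) {ψ : ℕ → ℕ} (hψ : StrictMono ψ)
  {H : ℝ → EReal} (hH : ∀ x, Tendsto (fun k => hn (ψ k) x) atTop (𝓝 (H x)))
include S hψ hH
set_option linter.unusedSectionVars false

lemma H_neg {x : ℝ} (hx : x < 0) : H x = ⊤ := by
  have : ∀ k, hn (ψ k) x = ⊤ := fun k => S.hneg (ψ k) x hx
  have h2 : Tendsto (fun _ : ℕ => (⊤:EReal)) atTop (𝓝 (H x)) := (hH x).congr this
  exact tendsto_nhds_unique h2 tendsto_const_nhds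

lemma H_mem {x : ℝ} (hx : 0 ≤ x) : H x ∈ Set.Icc (0:EReal) (M:EReal) :=
  ⟨ge_of_tendsto' (hH x) (fun k => S.hn_nonneg (ψ k) x),
   le_of_tendsto' (hH x) (fun k => (S.hbdd (ψ k) x hx).2)⟩

lemma H_ne_top {x : ℝ} (hx : 0 ≤ x) : H x ≠ ⊤ :=
  ne_top_of_le_ne_top (EReal.coe_ne_top _) (H_mem S hψ hH hx).2

lemma H_ne_bot (x : ℝ) : H x ≠ ⊥ := by
  rcases lt_or_ge x 0 with h | h
  · simp [H_neg S hψ hH h]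
  · exact ne_of_gt (lt_of_lt_of_le (by simp : (⊥:EReal) < 0) (H_mem S hψ hH h).1)

lemma H_eq_coe {x : ℝ} (hx : 0 ≤ x) : H x = (((H x).toReal : ℝ) : EReal) :=
  (EReal.coe_toReal (H_ne_top S hψ hH hx) (H_ne_bot S hψ hH x)).symm

lemma HR_mem {x : ℝ} (hx : 0 ≤ x) : (H x).toReal ∈ Set.Icc (0:ℝ) M := by
  obtain ⟨h1, h2⟩ := H_mem S hψ hH hx
  constructor
  · simpa using EReal.toReal_le_toReal h1 (by simp) (H_ne_top S hψ hH hx)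
  · simpa using EReal.toReal_le_toReal h2 (H_ne_bot S hψ hH x) (by simp)

lemma toReal_tendsto {x : ℝ} (hx : 0 ≤ x) :
    Tendsto (fun k => (hn (ψ k) x).toReal) atTop (𝓝 ((H x).toReal)) :=
  (EReal.tendsto_toReal (H_ne_top S hψ hH hx) (H_ne_bot S hψ hH x)).comp (hH x)

lemma H_zero {x : ℝ} (hx : 2 ≤ x) : H x = 0 := by
  have hnn : (0:EReal) ≤ H x := (H_mem S hψ hH (by linarith)).1
  have hle : ∀ ε : ℝ, 0 < ε → H x ≤ (ε : EReal) := by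
    intro ε hε
    obtain ⟨N, hN⟩ := S.hsup ε hε
    refine le_of_tendsto (hH x) ?_
    filter_upwards [eventually_ge_atTop N] with k hk
    exact hN (ψ k) (le_trans hk hψ.le_apply) x hx
  refine le_antisymm ?_ hnn
  by_contra hc
  push_neg at hc
  obtain ⟨c, hc1, hc2⟩ := EReal.exists_between_coe_real hc
  have hcpos : (0:ℝ) < c := by exact_mod_cast hc1
  exact absurd (hle c hcpos) (not_le.2 hc2)

lemma H_modulus : ∀ ε : ℝ, 0 < ε → ∃ δ > (0:ℝ), ∀ x ∈ Set.Icc (0:ℝ) 2, ∀ y ∈ Set.Icc (0:ℝ) 2,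
    |x - y| ≤ δ → |(H x).toReal - (H y).toReal| ≤ ε := by
  intro ε hε
  obtain ⟨δ, hδ, N, hN⟩ := S.hequi ε hε
  refine ⟨δ, hδ, fun x hx y hy hxy => ?_⟩
  have htt : Tendsto (fun k => |(hn (ψ k) x).toReal - (hn (ψ k) y).toReal|) atTop
      (𝓝 (|(H x).toReal - (H y).toReal|)) :=
    ((toReal_tendsto S hψ hH hx.1).sub (toReal_tendsto S hψ hH hy.1)).abs
  refine le_of_tendsto htt ?_
  filter_upwards [eventually_ge_atTop N] with k hk
  exact hN (ψ k) (le_trans hk hψ.le_apply) x hx y hy hxy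

/-- uniform convergence on `[0,2]` -/
lemma H_unif : ∀ ε : ℝ, 0 < ε → ∃ N, ∀ k ≥ N, ∀ z ∈ Set.Icc (0:ℝ) 2,
    |(hn (ψ k) z).toReal - (H z).toReal| ≤ ε := by
  intro ε hε
  obtain ⟨δ, hδ, N₀, hN₀⟩ := S.hequi (ε/3) (by linarith)
  obtain ⟨δ', hδ', hmod⟩ := H_modulus S hψ hH (ε/3) (by linarith)
  set θ : ℝ := min δ δ' with hθdef
  have hθ : 0 < θ := lt_min hδ hδ'
  set m : ℕ := max 1 ⌈2/θ⌉₊ with hmdef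
  have hm1 : 1 ≤ m := le_max_left _ _
  have hmpos : (0:ℝ) < m := by exact_mod_cast lt_of_lt_of_le one_pos hm1
  have hmθ : 2 / (m:ℝ) ≤ θ := by
    rw [div_le_iff₀ hmpos]
    have h1 : 2/θ ≤ (⌈2/θ⌉₊ : ℝ) := Nat.le_ceil _
    have h2 : ((⌈2/θ⌉₊:ℕ) : ℝ) ≤ (m:ℝ) := by exact_mod_cast le_max_right 1 ⌈2/θ⌉₊
    calc (2:ℝ) = (2/θ) * θ := by field_simp
    _ ≤ (m:ℝ) * θ := by nlinarith
    _ = θ * m := by ring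
  set p : ℕ → ℝ := fun i => 2 * i / m with hpdef
  have hpmem : ∀ i ≤ m, p i ∈ Set.Icc (0:ℝ) 2 := by
    intro i hi
    constructor
    · positivity
    · rw [div_le_iff₀ hmpos]
      have : (i:ℝ) ≤ m := by exact_mod_cast hi
      nlinarith
  have hev1 : ∀ᶠ k in atTop, ∀ i ∈ Finset.range (m+1),
      |(hn (ψ k) (p i)).toReal - (H (p i)).toReal| ≤ ε/3 := by
    rw [Filter.eventually_all_finset]
    intro i hi
    have hconv := toReal_tendsto S hψ hH (hpmem i (Nat.lt_succ_iff.1 (Finset.mem_range.1 hi))).1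
    have := Metric.tendsto_atTop.1 hconv (ε/3) (by linarith)
    obtain ⟨N, hN⟩ := this
    filter_upwards [eventually_ge_atTop N] with k hk
    have := hN k hk
    rw [Real.dist_eq] at this
    exact this.le
  have hev2 : ∀ᶠ k in atTop, N₀ ≤ ψ k := by
    filter_upwards [eventually_ge_atTop N₀] with k hk
    exact le_trans hk hψ.le_apply
  obtain ⟨N, hN⟩ := (hev1.and hev2).exists_forall_of_atTop
  refine ⟨N, fun k hk z hz => ?_⟩
  obtain ⟨hmesh, hψk⟩ := hN k hk
  -- nearest mesh point
  set i : ℕ := ⌊z * m / 2⌋₊ with hidef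
  have hznn : 0 ≤ z * m / 2 := by
    have := hz.1; positivity
  have hfl : (i:ℝ) ≤ z * m / 2 := Nat.floor_le hznn
  have hfl2 : z * m / 2 < (i:ℝ) + 1 := Nat.lt_floor_add_one _
  have him : i ≤ m := by
    have : (i:ℝ) ≤ (m:ℝ) := by nlinarith [hz.2]
    exact_mod_cast this
  have hpi : p i ∈ Set.Icc (0:ℝ) 2 := hpmem i him
  have hnear : |z - p i| ≤ θ := by
    have hle : 2 * (i:ℝ) / m ≤ z := by
      rw [div_le_iff₀ hmpos]; nlinarith
    have hlt : z - 2 * (i:ℝ) / m ≤ 2 / m := by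
      rw [sub_le_iff_le_add, ← add_div, le_div_iff₀ hmpos]
      nlinarith
    show |z - 2 * (i:ℝ) / m| ≤ θ
    rw [abs_of_nonneg (by linarith)]
    linarith
  have hnearδ : |z - p i| ≤ δ := le_trans hnear (min_le_left _ _)
  have hnearδ' : |z - p i| ≤ δ' := le_trans hnear (min_le_right _ _)
  have t1 : |(hn (ψ k) z).toReal - (hn (ψ k) (p i)).toReal| ≤ ε/3 :=
    hN₀ (ψ k) hψk z hz (p i) hpi hnearδ
  have t2 : |(hn (ψ k) (p i)).toReal - (H (p i)).toReal| ≤ ε/3 :=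
    hmesh i (Finset.mem_range.2 (by omega))
  have t3 : |(H (p i)).toReal - (H z).toReal| ≤ ε/3 :=
    hmod (p i) hpi z hz (by rwa [abs_sub_comm])
  have u1 := abs_sub_le ((hn (ψ k) z).toReal) ((hn (ψ k) (p i)).toReal) ((H z).toReal)
  have u2 := abs_sub_le ((hn (ψ k) (p i)).toReal) ((H (p i)).toReal) ((H z).toReal)
  linarith

lemma f_le_term (w y : ℝ) : f w ≤ (gE η y : EReal) + H (w - y) := by
  rcases lt_or_ge (w - y) 0 with hz | hz
  · rw [H_neg S hψ hH hz, EReal.add_top_of_ne_bot (EReal.coe_ne_bot _)]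
    exact le_top
  · have hfn : Tendsto (fun k => infConv (gE η) (hn (ψ k)) w) atTop (𝓝 (f w)) :=
      (S.hconvlim w).comp hψ.tendsto_atTop
    have hrhs : Tendsto (fun k => ((gE η y + (hn (ψ k) (w - y)).toReal : ℝ) : EReal)) atTop
        (𝓝 ((gE η y + (H (w - y)).toReal : ℝ) : EReal)) :=
      EReal.tendsto_coe.2 ((tendsto_const_nhds).add (toReal_tendsto S hψ hH hz))
    have hle : ∀ k, infConv (gE η) (hn (ψ k)) w
        ≤ ((gE η y + (hn (ψ k) (w - y)).toReal : ℝ) : EReal) := by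
      intro k
      have := iInf_le (fun y' => ((gE η y' : ℝ) : EReal) + hn (ψ k) (w - y')) y
      rw [EReal.coe_add, ← S.hn_eq_coe (ψ k) hz]
      exact this
    have := le_of_tendsto_of_tendsto' hfn hrhs hle
    rwa [EReal.coe_add, ← H_eq_coe S hψ hH hz] at this

lemma f_le_infConv_H (w : ℝ) : f w ≤ infConv (gE η) H w :=
  le_iInf fun y => f_le_term S hψ hH w y

lemma infConv_H_nonneg (w : ℝ) : (0:EReal) ≤ infConv (gE η) H w := by
  refine le_iInf fun y => ?_
  rcases lt_or_ge (w - y) 0 with hz | hz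
  · rw [H_neg S hψ hH hz, EReal.add_top_of_ne_bot (EReal.coe_ne_bot _)]
    exact le_top
  · have h1 : (0:EReal) ≤ ((gE η y : ℝ) : EReal) := by exact_mod_cast gE_nonneg S.hη y
    have h2 := (H_mem S hψ hH hz).1
    calc (0:EReal) = 0 + 0 := by simp
    _ ≤ _ := add_le_add h1 h2

lemma infConv_H_le_f (w : ℝ) : infConv (gE η) H w ≤ f w := by
  set A := infConv (gE η) H w with hA
  have hAtop : A ≠ ⊤ := by
    have h1 : A ≤ ((gE η w : ℝ):EReal) + H (w - w) := iInf_le _ w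
    have h2 : H (w - w) ≤ (M:EReal) := by
      rw [sub_self]; exact (H_mem S hψ hH le_rfl).2
    have h3 : A ≤ ((gE η w + M : ℝ):EReal) := by
      refine h1.trans ?_
      rw [EReal.coe_add]
      exact add_le_add (le_refl _) h2
    exact ne_top_of_le_ne_top (EReal.coe_ne_top _) h3
  have hAbot : A ≠ ⊥ :=
    ne_of_gt (lt_of_lt_of_le (by simp : (⊥:EReal) < 0) (infConv_H_nonneg S hψ hH w))
  have hAcoe : A = ((A.toReal : ℝ) : EReal) := (EReal.coe_toReal hAtop hAbot).symm
  have hmain : ∀ ε : ℝ, 0 < ε → ((A.toReal - ε : ℝ) : EReal) ≤ f w := by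
    intro ε hε
    obtain ⟨N, hNu⟩ := H_unif S hψ hH ε hε
    have hev : ∀ᶠ k in atTop, ((A.toReal - ε : ℝ) : EReal)
        ≤ infConv (gE η) (hn (ψ k)) w := by
      filter_upwards [eventually_ge_atTop N] with k hk
      refine le_iInf fun y => ?_
      set z := w - y with hzdef
      rcases lt_or_ge z 0 with hz | hz
      · rw [S.hneg (ψ k) z hz, EReal.add_top_of_ne_bot (EReal.coe_ne_bot _)]
        exact le_top
      · have hterm : A ≤ ((gE η y : ℝ):EReal) + H z := iInf_le _ y
        rcases le_or_gt z 2 with hz2 | hz2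
        · -- use uniform convergence
          have hterm' : ((A.toReal : ℝ):EReal) ≤ ((gE η y + (H z).toReal : ℝ):EReal) := by
            rw [EReal.coe_add, ← H_eq_coe S hψ hH hz, ← hAcoe]
            exact hterm
          have hAr : A.toReal ≤ gE η y + (H z).toReal := by exact_mod_cast hterm' 
          have hu := hNu k hk z ⟨hz, hz2⟩
          have : A.toReal - ε ≤ gE η y + (hn (ψ k) z).toReal := by
            have := abs_le.1 hu
            linarith [this.2]
          rw [S.hn_eq_coe (ψ k) hz, ← EReal.coe_add]
          exact_mod_cast this
        · -- z ≥ 2 : H z = 0 so A ≤ g y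
          have hH0 : H z = 0 := H_zero S hψ hH (le_of_lt hz2)
          rw [hH0, add_zero] at hterm
          have hAr : A.toReal ≤ gE η y := by
            rw [hAcoe] at hterm; exact_mod_cast hterm
          have h0 : (0:EReal) ≤ hn (ψ k) z := S.hn_nonneg (ψ k) z
          calc ((A.toReal - ε : ℝ) : EReal) ≤ ((gE η y : ℝ):EReal) := by
                exact_mod_cast by linarith
          _ = ((gE η y : ℝ):EReal) + 0 := by rw [add_zero]
          _ ≤ _ := add_le_add (le_refl _) h0
    exact ge_of_tendsto ((S.hconvlim w).comp hψ.tendsto_atTop) hev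
  by_contra hc
  push_neg at hc
  rw [hAcoe] at hc
  obtain ⟨c, hc1, hc2⟩ := EReal.exists_between_coe_real hc
  have h4 : c < A.toReal := by exact_mod_cast hc2
  have := hmain (A.toReal - c) (by linarith)
  have h5 : ((A.toReal - (A.toReal - c) : ℝ) : EReal) = (c : EReal) := by norm_num
  rw [h5] at this
  exact absurd this (not_le.2 hc1)

lemma f_eq_infConv_H (w : ℝ) : f w = infConv (gE η) H w :=
  le_antisymm (f_le_infConv_H S hψ hH w) (infConv_H_le_f S hψ hH w)

lemma h_le_H (x : ℝ) : infDeconv f (gE η) x ≤ H x := by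
  refine iSup_le fun y => ?_
  have h1 : f (x - y) ≤ ((gE η (-y) : ℝ):EReal) + H (x - y - -y) := f_le_term S hψ hH (x - y) (-y)
  rw [gE_even, sub_neg_eq_add, sub_add_cancel] at h1
  exact EReal.sub_le_of_le_add' h1

lemma HR_convexOn : ConvexOn ℝ (Set.Ici (0:ℝ)) (fun z => (H z).toReal) := by
  have hcv : ERealConvexOn H := S.hsubconv ψ hψ H hH
  refine ⟨convex_Ici 0, fun a ha b hb s t hs ht hst => ?_⟩
  have ht' : t = 1 - s := by linarith
  subst ht'
  have hcomb : (0:ℝ) ≤ s * a + (1 - s) * b := by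
    nlinarith [Set.mem_Ici.1 ha, Set.mem_Ici.1 hb]
  have key := hcv a b s hs (by linarith)
  rw [H_eq_coe S hψ hH (Set.mem_Ici.1 ha), H_eq_coe S hψ hH (Set.mem_Ici.1 hb),
    H_eq_coe S hψ hH hcomb] at key
  have hreal : (H (s * a + (1 - s) * b)).toReal
      ≤ s * (H a).toReal + (1 - s) * (H b).toReal := by
    exact_mod_cast key
  simpa [smul_eq_mul] using hreal

lemma f_ge_g_neg {s : ℝ} (hs : s ≤ 0) : ((gE η s : ℝ):EReal) ≤ f s := by
  refine ge_of_tendsto' (S.hconvlim s) fun n => ?_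
  refine le_iInf fun y => ?_
  rcases lt_or_ge (s - y) 0 with hz | hz
  · rw [S.hneg n _ hz, EReal.add_top_of_ne_bot (EReal.coe_ne_bot _)]
    exact le_top
  · have hy : y ≤ s := by linarith
    have hgy : gE η s ≤ gE η y := by
      unfold gE
      nlinarith [S.hη, mul_nonneg (neg_nonneg.2 (by linarith : y - s ≤ 0))
        (neg_nonneg.2 (by linarith : y + s ≤ 0))]
    calc ((gE η s : ℝ):EReal) ≤ ((gE η y : ℝ):EReal) := by exact_mod_cast hgy
    _ = ((gE η y : ℝ):EReal) + 0 := by rw [add_zero]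
    _ ≤ _ := add_le_add (le_refl _) (S.hn_nonneg n _)

lemma h_neg_top {x : ℝ} (hx : x < 0) : infDeconv f (gE η) x = ⊤ := by
  rw [EReal.eq_top_iff_forall_lt]
  intro c
  set s : ℝ := min 0 ((2*(c+1)/η + x^2)/(2*x)) with hsdef
  have hs0 : s ≤ 0 := min_le_left _ _
  have hskey : c + 1 ≤ η/2 * (2*x*s - x^2) := by
    have hs1 : s ≤ (2*(c+1)/η + x^2)/(2*x) := min_le_right _ _
    have h2x : 2*x < 0 := by linarith
    have hη := S.hη
    rw [le_div_iff_of_neg h2x] at hs1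
    have h3 : 2*(c+1)/η + x^2 ≤ 2*x*s := by nlinarith [hs1]
    have h5 : η/2 * (2*(c+1)/η + x^2) ≤ η/2 * (2*x*s) :=
      mul_le_mul_of_nonneg_left h3 (by linarith)
    have h6 : η/2 * (2*(c+1)/η + x^2) = (c+1) + η/2*x^2 := by field_simp
    have h7 : η/2*(2*x*s - x^2) = η/2*(2*x*s) - η/2*x^2 := by ring
    rw [h7]; linarith
  have hterm : ((c+1 : ℝ) : EReal) ≤ f s - ((gE η (x - s) : ℝ):EReal) := by
    rw [EReal.le_sub_iff_add_le (Or.inl (EReal.coe_ne_bot _)) (Or.inl (EReal.coe_ne_top _)),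
      ← EReal.coe_add]
    refine le_trans ?_ (f_ge_g_neg S hψ hH hs0)
    have : c + 1 + gE η (x - s) ≤ gE η s := by
      have : gE η s - gE η (x - s) = η/2 * (2*x*s - x^2) := by unfold gE; ring
      linarith [hskey, this]
    exact_mod_cast this
  have hle : f s - ((gE η (x - s) : ℝ):EReal) ≤ infDeconv f (gE η) x := by
    have := le_iSup (fun y => f (x - y) - ((gE η y : ℝ):EReal)) (x - s)
    rw [sub_sub_cancel] at this; exact this
  calc (c : EReal) < ((c+1:ℝ) : EReal) := by exact_mod_cast (by linarith : c < c + 1)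
  _ ≤ _ := hterm.trans hle

lemma H_le_h_pos {x : ℝ} (hx : 0 < x) : H x ≤ infDeconv f (gE η) x := by
  have hη := S.hη
  set HR : ℝ → ℝ := fun z => (H z).toReal with hHRdef
  have hcv := HR_convexOn S hψ hH
  set Sr : Set ℝ := {s | ∃ z, x < z ∧ s = (HR z - HR x)/(z - x)} with hSrdef
  have hne : Sr.Nonempty := ⟨(HR (x+1) - HR x)/(x+1-x), x+1, by linarith, rfl⟩
  have hlb : ∀ s ∈ Sr, (HR x - HR 0)/(x - 0) ≤ s := by
    rintro s ⟨z, hz, rfl⟩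
    exact hcv.slope_mono_adjacent (Set.mem_Ici.2 le_rfl)
      (Set.mem_Ici.2 (by linarith : (0:ℝ) ≤ z)) hx hz
  set q : ℝ := sInf Sr with hqdef
  have hq_le : ∀ z, x < z → q ≤ (HR z - HR x)/(z - x) := fun z hz =>
    csInf_le ⟨_, hlb⟩ ⟨z, hz, rfl⟩
  have hle_q : ∀ z, 0 ≤ z → z < x → (HR x - HR z)/(x - z) ≤ q := by
    intro z hz hzx
    refine le_csInf hne ?_
    rintro s ⟨z', hz', rfl⟩
    exact hcv.slope_mono_adjacent (Set.mem_Ici.2 hz)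
      (Set.mem_Ici.2 (by linarith : (0:ℝ) ≤ z')) hzx (by linarith)
  have hsub : ∀ z, 0 ≤ z → HR x + q * (z - x) ≤ HR z := by
    intro z hz
    rcases lt_trichotomy z x with hlt | heq | hgt
    · have h1 := hle_q z hz hlt
      rw [div_le_iff₀ (by linarith : (0:ℝ) < x - z)] at h1
      nlinarith [h1]
    · subst heq; simp
    · have h1 := hq_le z hgt
      rw [le_div_iff₀ (by linarith : (0:ℝ) < z - x)] at h1
      nlinarith [h1]
  set w : ℝ := x + q/η with hwdef
  have hwx : η * (w - x) = q := by
    rw [hwdef]; field_simp; ring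
  have hkey : ∀ y : ℝ, ((gE η (w - x) + HR x : ℝ):EReal) ≤ ((gE η y:ℝ):EReal) + H (w - y) := by
    intro y
    rcases lt_or_ge (w - y) 0 with hz | hz
    · rw [H_neg S hψ hH hz, EReal.add_top_of_ne_bot (EReal.coe_ne_bot _)]
      exact le_top
    · set z : ℝ := w - y with hzdef
      have hy : y = w - z := by rw [hzdef]; ring
      have hgrad := gE_sub_grad hη (w - z) (w - x)
      have hreal : gE η (w - x) + HR x ≤ gE η y + HR z := by
        have h2 := hsub z hz
        have h3 : η * (w - x) * ((w - z) - (w - x)) = q * (x - z) := by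
          rw [← hwx]; ring
        rw [h3] at hgrad
        rw [hy]
        nlinarith [hgrad, h2]
      calc ((gE η (w - x) + HR x : ℝ):EReal) ≤ ((gE η y + HR z : ℝ):EReal) := by
            exact_mod_cast hreal
      _ = ((gE η y:ℝ):EReal) + H z := by
            rw [EReal.coe_add, ← H_eq_coe S hψ hH hz]
  have hfw : ((gE η (w - x) + HR x : ℝ):EReal) ≤ f w := by
    rw [f_eq_infConv_H S hψ hH w]
    exact le_iInf hkey
  have hgeq : gE η (x - w) = gE η (w - x) := by
    have := gE_even η (w - x)
    rw [show -(w-x) = x - w by ring] at this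
    exact this
  have hstep : (((HR x : ℝ)):EReal) ≤ f w - ((gE η (x - w) : ℝ):EReal) := by
    rw [EReal.le_sub_iff_add_le (Or.inl (EReal.coe_ne_bot _)) (Or.inl (EReal.coe_ne_top _)),
      ← EReal.coe_add, hgeq]
    refine le_trans ?_ hfw
    exact_mod_cast le_of_eq (by ring)
  have hfinal : f w - ((gE η (x - w) : ℝ):EReal) ≤ infDeconv f (gE η) x := by
    have := le_iSup (fun y => f (x - y) - ((gE η y:ℝ):EReal)) (x - w)
    rw [show x - (x - w) = w by ring] at this
    exact this
  rw [H_eq_coe S hψ hH (le_of_lt hx)]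
  exact hstep.trans hfinal

lemma H_le_h_zero : H 0 ≤ infDeconv f (gE η) 0 := by
  have hη := S.hη
  by_contra hc
  push_neg at hc
  rw [H_eq_coe S hψ hH le_rfl] at hc
  obtain ⟨c, hc1, hc2⟩ := EReal.exists_between_coe_real hc
  set HR0 : ℝ := (H 0).toReal with hHR0
  have hcR : c < HR0 := by exact_mod_cast hc2
  set ε : ℝ := HR0 - c with hε
  have hεpos : 0 < ε := by linarith
  obtain ⟨δ, hδ, hmod⟩ := H_modulus S hψ hH ε hεpos
  set δ' : ℝ := min δ 2 with hδ'def
  have hδ'pos : 0 < δ' := lt_min hδ (by norm_num)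
  set T : ℝ := M / (η * δ') with hTdef
  have hTpos : 0 < T := div_pos S.hM (by positivity)
  have hkey : ∀ y : ℝ, ((gE η T + (HR0 - ε) : ℝ):EReal) ≤ ((gE η y:ℝ):EReal) + H (-T - y) := by
    intro y
    rcases lt_or_ge (-T - y) 0 with hz | hz
    · rw [H_neg S hψ hH hz, EReal.add_top_of_ne_bot (EReal.coe_ne_bot _)]
      exact le_top
    · set z : ℝ := -T - y with hzdef
      have hy : y = -(T + z) := by rw [hzdef]; ring
      have hgy : gE η y = gE η (T + z) := by rw [hy, gE_even]
      have hexp : gE η (T + z) = gE η T + η * T * z + gE η z := by unfold gE; ring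
      have hreal : gE η T + (HR0 - ε) ≤ gE η y + (H z).toReal := by
        rw [hgy, hexp]
        have hz0 : 0 ≤ (H z).toReal := (HR_mem S hψ hH hz).1
        rcases le_or_gt z δ' with hzδ | hzδ
        · have hmz : |z - 0| ≤ δ := by
            rw [sub_zero, abs_of_nonneg hz]
            exact hzδ.trans (min_le_left _ _)
          have := hmod z ⟨hz, hzδ.trans (min_le_right _ _)⟩ 0
            ⟨le_rfl, by norm_num⟩ hmz
          have h5 : HR0 - ε ≤ (H z).toReal := by
            have := abs_le.1 this
            simp only [hHR0] at *
            linarith [this.1]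
          nlinarith [gE_nonneg hη z, mul_nonneg (mul_nonneg (le_of_lt hη) (le_of_lt hTpos)) hz]
        · have hM' : M ≤ η * T * z := by
            have : η * T * δ' = M := by
              rw [hTdef]; field_simp
            nlinarith [mul_pos hη hTpos]
          have hHRM : HR0 ≤ M := (HR_mem S hψ hH le_rfl).2
          nlinarith [gE_nonneg hη z]
      calc ((gE η T + (HR0 - ε) : ℝ):EReal) ≤ ((gE η y + (H z).toReal : ℝ):EReal) := by
            exact_mod_cast hreal
      _ = ((gE η y:ℝ):EReal) + H z := by
            rw [EReal.coe_add, ← H_eq_coe S hψ hH hz]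
  have hfw : ((gE η T + (HR0 - ε) : ℝ):EReal) ≤ f (-T) := by
    rw [f_eq_infConv_H S hψ hH (-T)]
    exact le_iInf hkey
  have hstep : ((HR0 - ε : ℝ):EReal) ≤ f (-T) - ((gE η T : ℝ):EReal) := by
    rw [EReal.le_sub_iff_add_le (Or.inl (EReal.coe_ne_bot _)) (Or.inl (EReal.coe_ne_top _)),
      ← EReal.coe_add]
    refine le_trans ?_ hfw
    exact_mod_cast le_of_eq (by ring)
  have hfinal : f (-T) - ((gE η T : ℝ):EReal) ≤ infDeconv f (gE η) 0 := by
    have := le_iSup (fun y => f (0 - y) - ((gE η y:ℝ):EReal)) T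
    rw [show (0:ℝ) - T = -T by ring] at this
    exact this
  have : ((c : ℝ):EReal) ≤ infDeconv f (gE η) 0 := by
    have he : ((HR0 - ε : ℝ):EReal) = (c : EReal) := by rw [hε]; norm_num
    rw [← he]
    exact hstep.trans hfinal
  exact absurd this (not_le.2 hc1)

lemma H_eq_h (x : ℝ) : H x = infDeconv f (gE η) x := by
  rcases lt_trichotomy x 0 with hx | hx | hx
  · rw [H_neg S hψ hH hx, h_neg_top S hψ hH hx]
  · subst hx
    exact le_antisymm (H_le_h_zero S hψ hH) (h_le_H S hψ hH 0)
  · exact le_antisymm (H_le_h_pos S hψ hH hx) (h_le_H S hψ hH x)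

end LimSec

lemma Setup.tendsto_h (S : Setup η hn M f) (x : ℝ) :
    Tendsto (fun n => hn n x) atTop (𝓝 (infDeconv f (gE η) x)) := by
  apply tendsto_of_subseq_tendsto
  intro ns hns
  obtain ⟨φ₀, hφ₀, hcomp⟩ := strictMono_subseq_of_tendsto_atTop hns
  obtain ⟨ms, hms, H, hconv⟩ := S.extract (ns ∘ φ₀) hcomp
  refine ⟨φ₀ ∘ ms, ?_⟩
  have hψ : StrictMono (fun k => (ns ∘ φ₀) (ms k)) := hcomp.comp hms
  have := H_eq_h S hψ hconv x
  rw [← this]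
  exact hconv x

lemma Setup.f_eq_conv (S : Setup η hn M f) (x : ℝ) :
    f x = infConv (gE η) (infDeconv f (gE η)) x := by
  obtain ⟨ms, hms, H, hconv⟩ := S.extract id strictMono_id
  have hψ : StrictMono (fun k => id (ms k)) := hms
  have hHh : H = infDeconv f (gE η) := funext (H_eq_h S hψ hconv)
  rw [← hHh]
  exact f_eq_infConv_H S hψ hconv x

lemma Setup.h_contOn (S : Setup η hn M f) :
    ContinuousOn (infDeconv f (gE η)) (Set.Ici 0) := by
  obtain ⟨ms, hms, H, hconv⟩ := S.extract id strictMono_id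
  have hψ : StrictMono (fun k => id (ms k)) := hms
  have hHh : H = infDeconv f (gE η) := funext (H_eq_h S hψ hconv)
  rw [← hHh]
  -- uniform-continuity-style estimate on [0,∞)
  have hest : ∀ ε : ℝ, 0 < ε → ∃ δ > (0:ℝ), ∀ x ∈ Set.Ici (0:ℝ), ∀ y ∈ Set.Ici (0:ℝ),
      |x - y| ≤ δ → |(H x).toReal - (H y).toReal| ≤ ε := by
    intro ε hε
    obtain ⟨δ, hδ, hmod⟩ := H_modulus S hψ hconv ε hε
    refine ⟨δ, hδ, ?_⟩
    have key : ∀ x ∈ Set.Ici (0:ℝ), ∀ y ∈ Set.Ici (0:ℝ), x ≤ y →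
        |x - y| ≤ δ → |(H x).toReal - (H y).toReal| ≤ ε := by
      intro x hx y hy hxy hd
      rcases le_or_gt y 2 with hy2 | hy2
      · exact hmod x ⟨hx, by linarith⟩ y ⟨hy, hy2⟩ hd
      · have hHy : (H y).toReal = 0 := by
          simp [H_zero S hψ hconv (le_of_lt hy2)]
        rcases le_or_gt x 2 with hx2 | hx2
        · have hH2 : (H 2).toReal = 0 := by
            simp [H_zero S hψ hconv le_rfl]
          have hd2 : |x - 2| ≤ δ := by
            rw [abs_of_nonpos (by linarith)] at hd ⊢
            linarith
          have := hmod x ⟨hx, hx2⟩ 2 ⟨by norm_num, le_rfl⟩ hd2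
          rw [hH2] at this
          rw [hHy]
          exact this
        · have hHx : (H x).toReal = 0 := by
            simp [H_zero S hψ hconv (le_of_lt hx2)]
          rw [hHx, hHy]
          simpa using le_of_lt hε
    intro x hx y hy hd
    rcases le_total x y with h | h
    · exact key x hx y hy h hd
    · rw [abs_sub_comm] at hd ⊢
      exact key y hy x hx h hd
  have hcontHR : ContinuousOn (fun z => (H z).toReal) (Set.Ici 0) := by
    intro x hx
    rw [Metric.continuousWithinAt_iff]
    intro ε hε
    obtain ⟨δ, hδ, hd⟩ := hest (ε/2) (by linarith)
    refine ⟨δ, hδ, fun {y} hy hdist => ?_⟩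
    have := hd y hy x hx (by rw [Real.dist_eq] at hdist; exact le_of_lt hdist)
    rw [Real.dist_eq]
    linarith [this]
  have hcoe : ContinuousOn (fun z => (((H z).toReal : ℝ) : EReal)) (Set.Ici 0) :=
    continuous_coe_real_ereal.comp_continuousOn hcontHR
  refine hcoe.congr ?_
  intro z hz
  exact H_eq_coe S hψ hconv (Set.mem_Ici.1 hz)

lemma exists_subgrad {J : ℝ → ℝ} (hJ : ConvexOn ℝ Set.univ J) (x : ℝ) :
    ∃ p : ℝ, ∀ y, J x + p * (y - x) ≤ J y := by
  set Sl : Set ℝ := {s | ∃ z, z < x ∧ s = (J x - J z)/(x - z)} with hSl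
  have hne : Sl.Nonempty := ⟨(J x - J (x-1))/(x - (x-1)), x-1, by linarith, rfl⟩
  have hub : ∀ s ∈ Sl, s ≤ (J (x+1) - J x)/(x+1-x) := by
    rintro s ⟨z, hz, rfl⟩
    exact hJ.slope_mono_adjacent (Set.mem_univ z) (Set.mem_univ (x+1)) hz (by linarith)
  set q : ℝ := sSup Sl with hq
  refine ⟨q, fun y => ?_⟩
  rcases lt_trichotomy y x with hlt | heq | hgt
  · have h1 : (J x - J y)/(x - y) ≤ q := le_csSup ⟨_, hub⟩ ⟨y, hlt, rfl⟩
    rw [div_le_iff₀ (by linarith : (0:ℝ) < x - y)] at h1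
    nlinarith [h1]
  · subst heq; simp
  · have h1 : q ≤ (J y - J x)/(y - x) := by
      refine csSup_le hne ?_
      rintro s ⟨z, hz, rfl⟩
      exact hJ.slope_mono_adjacent (Set.mem_univ z) (Set.mem_univ y) hz hgt
    rw [le_div_iff₀ (by linarith : (0:ℝ) < y - x)] at h1
    nlinarith [h1]

lemma Setup.infConv_ne_bot (S : Setup η hn M f) (n : ℕ) (x : ℝ) :
    infConv (gE η) (hn n) x ≠ ⊥ :=
  ne_of_gt (lt_of_lt_of_le (by simp : (⊥:EReal) < 0) (S.infConv_nonneg n x))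

lemma Setup.infConv_ne_top (S : Setup η hn M f) (n : ℕ) (x : ℝ) :
    infConv (gE η) (hn n) x ≠ ⊤ :=
  ne_top_of_le_ne_top (EReal.coe_ne_top _) (S.infConv_le n x)

lemma Setup.Fn_tendsto (S : Setup η hn M f) (x : ℝ) :
    Tendsto (fun n => (infConv (gE η) (hn n) x).toReal) atTop (𝓝 (S.F x)) :=
  (EReal.tendsto_toReal (S.f_ne_top x) (S.f_ne_bot x)).comp (S.hconvlim x)

lemma Setup.Fn_le (S : Setup η hn M f) (n : ℕ) {z : ℝ} (hz : 0 ≤ z) (a : ℝ) :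
    (infConv (gE η) (hn n) a).toReal ≤ gE η (a - z) + (hn n z).toReal := by
  have h1 : infConv (gE η) (hn n) a ≤ ((gE η (a-z) : ℝ):EReal) + hn n z := by
    have := iInf_le (fun y => ((gE η y:ℝ):EReal) + hn n (a - y)) (a - z)
    rw [show a - (a - z) = z by ring] at this
    exact this
  have h2 : ((gE η (a-z):ℝ):EReal) + hn n z = ((gE η (a-z) + (hn n z).toReal : ℝ):EReal) := by
    rw [EReal.coe_add, ← S.hn_eq_coe n hz]
  rw [h2] at h1
  have := EReal.toReal_le_toReal h1 (S.infConv_ne_bot n a) (EReal.coe_ne_top _)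
  rwa [EReal.toReal_coe] at this

lemma Setup.F_combo (S : Setup η hn M f) (a b t : ℝ) (ht0 : 0 ≤ t) (ht1 : t ≤ 1) :
    t * S.F a + (1-t) * S.F b - η*t*(1-t)*(a-b)^2/2 ≤ S.F (t*a + (1-t)*b) := by
  set c : ℝ := η*t*(1-t)*(a-b)^2/2 with hc
  have hstep : ∀ n, t * (infConv (gE η) (hn n) a).toReal
      + (1-t) * (infConv (gE η) (hn n) b).toReal - c
      ≤ (infConv (gE η) (hn n) (t*a + (1-t)*b)).toReal := by
    intro n
    have hE : ((t * (infConv (gE η) (hn n) a).toReal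
        + (1-t) * (infConv (gE η) (hn n) b).toReal - c : ℝ):EReal)
        ≤ infConv (gE η) (hn n) (t*a + (1-t)*b) := by
      refine le_iInf fun y => ?_
      rcases lt_or_ge (t*a + (1-t)*b - y) 0 with hzn | hzn
      · rw [S.hneg n _ hzn, EReal.add_top_of_ne_bot (EReal.coe_ne_bot _)]
        exact le_top
      · set z : ℝ := t*a + (1-t)*b - y with hzdef
        have hy : y = t*a + (1-t)*b - z := by rw [hzdef]; ring
        have hcombo := gE_combo η t a b z
        have hFa := S.Fn_le n hzn a
        have hFb := S.Fn_le n hzn b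
        have hreal : t * (infConv (gE η) (hn n) a).toReal
            + (1-t) * (infConv (gE η) (hn n) b).toReal - c
            ≤ gE η y + (hn n z).toReal := by
          rw [hy]
          nlinarith [mul_le_mul_of_nonneg_left hFa ht0,
            mul_le_mul_of_nonneg_left hFb (by linarith : (0:ℝ) ≤ 1 - t), hcombo]
        calc ((t * (infConv (gE η) (hn n) a).toReal
            + (1-t) * (infConv (gE η) (hn n) b).toReal - c : ℝ):EReal)
            ≤ ((gE η y + (hn n z).toReal : ℝ):EReal) := by exact_mod_cast hreal
        _ = ((gE η y:ℝ):EReal) + hn n z := by rw [EReal.coe_add, ← S.hn_eq_coe n hzn]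
      
    have := EReal.toReal_le_toReal hE (EReal.coe_ne_bot _)
      (S.infConv_ne_top n (t*a + (1-t)*b))
    simpa only [EReal.toReal_coe] using this
  have hL : Tendsto (fun n => t * (infConv (gE η) (hn n) a).toReal
      + (1-t) * (infConv (gE η) (hn n) b).toReal - c) atTop
      (𝓝 (t * S.F a + (1-t) * S.F b - c)) :=
    (((S.Fn_tendsto a).const_mul t).add ((S.Fn_tendsto b).const_mul (1-t))).sub_const c
  exact le_of_tendsto_of_tendsto' hL (S.Fn_tendsto (t*a + (1-t)*b)) hstep

lemma Setup.convexOn_J (S : Setup η hn M f) :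
    ConvexOn ℝ Set.univ (fun x => η*x^2/2 - S.F x) := by
  refine ⟨convex_univ, fun a _ b _ s t hs ht hst => ?_⟩
  have ht' : t = 1 - s := by linarith
  subst ht'
  have key := S.F_combo a b s hs (by linarith)
  have hid : η*(s*a+(1-s)*b)^2/2
      = s*(η*a^2/2) + (1-s)*(η*b^2/2) - η*s*(1-s)*(a-b)^2/2 := by ring
  simp only [smul_eq_mul]
  nlinarith [key, hid]

lemma Setup.convexOn_F (S : Setup η hn M f) (hfconv : ERealConvexOn f) :
    ConvexOn ℝ Set.univ S.F := by
  refine ⟨convex_univ, fun a _ b _ s t hs ht hst => ?_⟩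
  have ht' : t = 1 - s := by linarith
  subst ht'
  have key := hfconv a b s hs (by linarith)
  rw [S.f_eq_F a, S.f_eq_F b, S.f_eq_F (s*a + (1-s)*b)] at key
  have : S.F (s*a+(1-s)*b) ≤ s * S.F a + (1-s) * S.F b := by exact_mod_cast key
  simpa [smul_eq_mul] using this

lemma Setup.smooth (S : Setup η hn M f) (hfconv : ERealConvexOn f) :
    ∃ F' : ℝ → ℝ, (∀ x, HasDerivAt S.F (F' x) x) ∧
      ∀ x y : ℝ, |F' x - F' y| ≤ η * |x - y| := by
  have hη := S.hη
  have hFc := S.convexOn_F hfconv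
  have hJc := S.convexOn_J
  choose p hp using fun x => exists_subgrad hFc x
  choose r hr using fun x => exists_subgrad hJc x
  have hup : ∀ x y, S.F y ≤ S.F x + (η*x - r x)*(y - x) + η/2*(y-x)^2 := by
    intro x y
    have h0 := hr x y
    nlinarith [h0]
  have hpr : ∀ x, p x = η * x - r x := by
    intro x
    set d : ℝ := p x - (η * x - r x) with hd
    have hd0 : d = 0 := by
      have hkey : ∀ y : ℝ, d * (y - x) ≤ η/2*(y-x)^2 := by
        intro y
        have h1 := hp x y
        have h2 := hup x y
        nlinarith [h1, h2]
      have h3 := hkey (x + d/η)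
      rw [show x + d/η - x = d/η by ring] at h3
      have h5 : d * (d/η) = d^2/η := by ring
      have h6 : η/2*(d/η)^2 = d^2/(2*η) := by field_simp
      rw [h5, h6] at h3
      have h7 : d^2 ≤ 0 := by
        rw [div_le_div_iff₀ (by positivity) (by positivity)] at h3
        nlinarith [h3]
      have h8 : d^2 = 0 := le_antisymm h7 (sq_nonneg d)
      exact pow_eq_zero_iff (by norm_num) |>.1 h8
    rw [hd] at hd0
    linarith [hd0]
  refine ⟨p, fun x => ?_, fun x y => ?_⟩
  · rw [hasDerivAt_iff_isLittleO, Asymptotics.isLittleO_iff]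
    intro c hc
    rw [Metric.eventually_nhds_iff]
    refine ⟨2*c/η, by positivity, fun y hy => ?_⟩
    have hlow := hp x y
    have hupp : S.F y ≤ S.F x + p x * (y-x) + η/2*(y-x)^2 := by
      have := hup x y
      rw [hpr x]
      exact this
    have habs : |S.F y - S.F x - (y - x) * p x| ≤ η/2*(y-x)^2 := by
      rw [abs_le]
      constructor
      · nlinarith [hlow]
      · nlinarith [hupp]
    have hyx : |y - x| < 2*c/η := by rw [Real.dist_eq] at hy; exact hy
    have h2 : |y - x| * |y - x| ≤ (2*c/η) * |y - x| :=
      mul_le_mul_of_nonneg_right (le_of_lt hyx) (abs_nonneg _)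
    have h4 : η/2*((2*c/η) * |y - x|) = c * |y - x| := by field_simp
    calc ‖S.F y - S.F x - (y - x) • p x‖ = |S.F y - S.F x - (y-x) * p x| := by
          simp [Real.norm_eq_abs, smul_eq_mul]
    _ ≤ η/2*(y-x)^2 := habs
    _ = η/2*(|y - x| * |y - x|) := by rw [sq, ← abs_mul_abs_self]
    _ ≤ η/2*((2*c/η) * |y - x|) := mul_le_mul_of_nonneg_left h2 (by positivity)
    _ = c * |y - x| := h4
    _ = c * ‖y - x‖ := by simp [Real.norm_eq_abs]
  · have m1 : 0 ≤ (p x - p y) * (x - y) := by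
      have h1 := hp x y
      have h2 := hp y x
      nlinarith [h1, h2]
    have m2 : (p x - p y) * (x - y) ≤ η * (x - y)^2 := by
      rw [hpr x, hpr y]
      have h1 := hr x y
      have h2 := hr y x
      nlinarith [h1, h2]
    rcases eq_or_ne x y with rfl | hxy
    · simp
    · rcases lt_or_gt_of_ne hxy with hlt | hgt
      · rw [abs_of_neg (by linarith : x - y < 0), abs_of_nonpos (by nlinarith [m1] : p x - p y ≤ 0)]
        nlinarith [m2]
      · rw [abs_of_pos (by linarith : 0 < x - y), abs_of_nonneg (by nlinarith [m1] : 0 ≤ p x - p y)]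
        nlinarith [m2]

end Deconv

open Deconv in
/-- Deconvolution lemma: if weakly decreasing `h_n` (equal to `+∞` on `(−∞,0)`, uniformly
bounded on `[0,∞)`, with `sup_{x≥2} h_n → 0`, asymptotically equicontinuous on `[0,2]`,
with all subsequential pointwise limits convex) are such that `h_n ⊕ g` converges pointwise
to a proper lower semicontinuous convex `f`, then `h_n` converges pointwise to
`h = f ⊖ g`; moreover `f = g ⊕ h`, `h` is continuous on `[0,∞)`, and `f` is differentiable
with `η_q`-Lipschitz derivative. -/
theorem deconvolution_lemma (q : ℝ) (hq : q ∈ Set.Ioo (0 : ℝ) 1)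
    (hn : ℕ → ℝ → EReal)
    (hanti : ∀ n, Antitone (hn n))
    (hneg : ∀ n, ∀ x : ℝ, x < 0 → hn n x = ⊤)
    (M : ℝ) (hM : 0 < M)
    (hbdd : ∀ n, ∀ x : ℝ, 0 ≤ x → hn n x ∈ Set.Icc (0 : EReal) (M : EReal))
    (hsup : ∀ ε : ℝ, 0 < ε → ∃ N, ∀ n ≥ N, ∀ x : ℝ, 2 ≤ x → hn n x ≤ (ε : EReal))
    (hequi : ∀ ε : ℝ, 0 < ε → ∃ δ > (0 : ℝ), ∃ N, ∀ n ≥ N,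
      ∀ x ∈ Set.Icc (0 : ℝ) 2, ∀ y ∈ Set.Icc (0 : ℝ) 2,
        |x - y| ≤ δ → |(hn n x).toReal - (hn n y).toReal| ≤ ε)
    (hsubconv : ∀ φ : ℕ → ℕ, StrictMono φ → ∀ H : ℝ → EReal,
      (∀ x, Tendsto (fun k => hn (φ k) x) atTop (nhds (H x))) → ERealConvexOn H)
    (f : ℝ → EReal)
    (hproper : (∀ x, f x ≠ ⊥) ∧ ∃ x, f x ≠ ⊤)
    (hlsc : LowerSemicontinuous f)
    (hfconv : ERealConvexOn f)
    (hconvlim : ∀ x, Tendsto (fun n => infConv (gPar q) (hn n) x) atTop (nhds (f x))) :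
    (∀ x, Tendsto (fun n => hn n x) atTop (nhds (infDeconv f (gPar q) x))) ∧
    (∀ x, f x = infConv (gPar q) (infDeconv f (gPar q)) x) ∧
    ContinuousOn (infDeconv f (gPar q)) (Set.Ici 0) ∧
    ∃ F F' : ℝ → ℝ, (∀ x, f x = (F x : EReal)) ∧ (∀ x, HasDerivAt F (F' x) x) ∧
      ∀ x y : ℝ, |F' x - F' y| ≤ Real.log (1 / q) * |x - y| := by
  have hη : 0 < Real.log (1/q) :=
    Real.log_pos (by rw [lt_div_iff₀ hq.1]; linarith [hq.2])
  have S : Setup (Real.log (1/q)) hn M f :=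
    ⟨hη, hanti, hneg, hM, hbdd, hsup, hequi, hsubconv, hconvlim⟩
  refine ⟨fun x => S.tendsto_h x, fun x => S.f_eq_conv x, S.h_contOn, ?_⟩
  obtain ⟨F', hderiv, hlip⟩ := S.smooth hfconv
  exact ⟨S.F, F', S.f_eq_F, hderiv, hlip⟩
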